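/- Let k be a commutative ring and R a k-algebra with a topology such that R is a local ring and such that for every commutative k-algebra A and every f ∈ A, the map Hom_{k-alg}(A_f, R) → Hom_{k-alg}(A, R) induced by the localization A → A_f is an open topological embedding with respect to the affine topologies. Then for every k-scheme X and every affine open covering {U_i}_{i∈I} of X: X(R) = ⋃_{i∈I} U_i(R), and a subset W of X(R) is open in the fine topology if and only if W ∩ U_i(R) is open in U_i(R) in the fine topology for every i ∈ I. -/

import Mathlib

open AlgebraicGeometry CategoryTheory CategoryTheory.Limits Opposite TopologicalSpace

universe u

noncomputable section

/-- The affine topology on the set of `k`-algebra homomorphisms `A →ₐ[k] R`: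
the coarsest topology making all evaluation maps `f ↦ f a` continuous. -/
def affineTopology (k A R : Type*) [CommRing k] [CommRing A] [CommRing R]
    [Algebra k A] [Algebra k R] [TopologicalSpace R] :
    TopologicalSpace (A →ₐ[k] R) :=
  TopologicalSpace.induced (fun f (a : A) => f a) Pi.topologicalSpace

namespace SchemePoints

variable (k R : Type u) [CommRing k] [CommRing R] [Algebra k R]

/-- `Spec R` as a scheme over `Spec k`. -/
def specOver : Over (Spec (CommRingCat.of k)) :=
  Over.mk (Spec.map (CommRingCat.ofHom (algebraMap k R)))

/-- The set `X(R)` of `R`-rational points of a `k`-scheme `X`, i.e. morphisms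
`Spec R ⟶ X` over `Spec k`. -/
def pts (X : Over (Spec (CommRingCat.of k))) : Type u :=
  specOver k R ⟶ X

/-- Evaluation of a global section of `X` at an `R`-rational point. -/
def ev [TopologicalSpace R] (X : Over (Spec (CommRingCat.of k))) (g : pts k R X)
    (a : Γ(X.left, ⊤)) : R :=
  (Scheme.ΓSpecIso (CommRingCat.of R)).hom (Scheme.Hom.appTop ((Over.forget _).map g) a)

/-- The affine topology on `X(R)`. -/
def affineTop [TopologicalSpace R] (X : Over (Spec (CommRingCat.of k))) :
    TopologicalSpace (pts k R X) :=
  TopologicalSpace.induced (fun g (a : Γ(X.left, ⊤)) => ev k R X g a) Pi.topologicalSpace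

/-- The fine topology on `X(R)`: the finest topology such that for every morphism
`U ⟶ X` from an affine `k`-scheme `U`, the induced map `U(R) → X(R)` is continuous,
where `U(R)` carries the affine topology. -/
def fineTop [TopologicalSpace R] (X : Over (Spec (CommRingCat.of k))) :
    TopologicalSpace (pts k R X) :=
  ⨆ (U : Over (Spec (CommRingCat.of k))) (_ : IsAffine U.left) (φ : U ⟶ X),
    (affineTop k R U).coinduced (fun g => g ≫ φ)

end SchemePoints

namespace SchemePoints

variable {k : Type u} [CommRing k]

/-- An open subscheme of a `k`-scheme `X`, as a `k`-scheme. -/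
def opensOver (X : Over (Spec (CommRingCat.of k))) (V : X.left.Opens) :
    Over (Spec (CommRingCat.of k)) :=
  Over.mk (V.ι ≫ X.hom)

/-- The open immersion from an open subscheme of `X` into `X`, over `Spec k`. -/
def opensOverHom (X : Over (Spec (CommRingCat.of k))) (V : X.left.Opens) :
    opensOver X V ⟶ X :=
  Over.homMk V.ι rfl

end SchemePoints

namespace SchemePoints

open IsLocalRing Topology

variable {k R : Type u} [CommRing k] [CommRing R] [Algebra k R]

instance [IsLocalRing R] : IsLocalRing ↥(CommRingCat.of R) := ‹IsLocalRing R›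

/-- morphisms into an affine scheme are determined by their effect on global sections -/
lemma hom_spec_ext {Y : Scheme.{u}} {B : CommRingCat.{u}} {f g : Y ⟶ Spec B}
    (h : f.appTop = g.appTop) : f = g := by
  have hf := Scheme.toSpecΓ_naturality f
  have hg := Scheme.toSpecΓ_naturality g
  rw [h, ← hg] at hf
  exact (cancel_mono ((Spec B).toSpecΓ)).mp hf

/-- the `k`-algebra structure on the global sections of a `k`-scheme -/
instance overAlgebra (X : Over (Spec (CommRingCat.of k))) : Algebra k Γ(X.left, ⊤) :=
  RingHom.toAlgebra
    (((Scheme.ΓSpecIso (CommRingCat.of k)).inv ≫ X.hom.appTop :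
      CommRingCat.of k ⟶ Γ(X.left, ⊤)).hom : k →+* Γ(X.left, ⊤))

lemma overAlgebra_algebraMap (X : Over (Spec (CommRingCat.of k))) (c : k) :
    algebraMap k Γ(X.left, ⊤) c = X.hom.appTop ((Scheme.ΓSpecIso (CommRingCat.of k)).inv c) :=
  rfl

section

variable [TopologicalSpace R]

lemma ev_comp {X Y : Over (Spec (CommRingCat.of k))} (φ : Y ⟶ X) (g : pts k R Y)
    (a : Γ(X.left, ⊤)) :
    ev k R X (g ≫ φ) a = ev k R Y g (φ.left.appTop a) := by
  rfl

lemma continuous_affine_comp {X Y : Over (Spec (CommRingCat.of k))} (φ : Y ⟶ X) :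
    Continuous[affineTop k R Y, affineTop k R X] (fun g => g ≫ φ) := by
  letI t := affineTop k R Y
  have hb : ∀ b : Γ(Y.left, ⊤), Continuous[t, _] (fun g : pts k R Y => ev k R Y g b) :=
    fun b => (continuous_apply b).comp
      (continuous_induced_dom (f := fun (g : pts k R Y) (a : Γ(Y.left, ⊤)) => ev k R Y g a))
  refine continuous_induced_rng.mpr (continuous_pi fun a => ?_)
  show Continuous[t, _] fun g : pts k R Y => ev k R X (g ≫ φ) a
  simp only [ev_comp]
  exact hb _

lemma fineTop_le_affineTop (X : Over (Spec (CommRingCat.of k))) :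
    fineTop k R X ≤ affineTop k R X := by
  refine iSup_le fun Y => iSup_le fun hY => iSup_le fun φ => ?_
  exact continuous_iff_coinduced_le.mp (continuous_affine_comp φ)

lemma fineTop_eq_affineTop (X : Over (Spec (CommRingCat.of k))) [hX : IsAffine X.left] :
    fineTop k R X = affineTop k R X := by
  refine le_antisymm (fineTop_le_affineTop X) ?_
  refine le_iSup_of_le X (le_iSup_of_le hX (le_iSup_of_le (𝟙 X) ?_))
  have h2 : (affineTop k R X).coinduced (fun g : pts k R X => g ≫ 𝟙 X) = affineTop k R X := by
    have : (fun g : pts k R X => g ≫ 𝟙 X) = id := funext fun g => Category.comp_id g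
    rw [this]
    exact @coinduced_id _ (affineTop k R X)
  exact h2.ge

lemma continuous_fine_comp {X Y : Over (Spec (CommRingCat.of k))} (φ : Y ⟶ X) :
    Continuous[fineTop k R Y, fineTop k R X] (fun g => g ≫ φ) := by
  refine continuous_iff_coinduced_le.mpr ?_
  rw [fineTop]
  refine coinduced_iSup.trans_le ?_
  refine iSup_le fun Z => ?_
  refine coinduced_iSup.trans_le ?_
  refine iSup_le fun hZ => ?_
  refine coinduced_iSup.trans_le ?_
  refine iSup_le fun ψ => ?_
  refine le_trans (le_of_eq
    (@coinduced_compose _ _ _ (affineTop k R Z) (fun g => g ≫ ψ) (fun g => g ≫ φ)).symm) ?_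
  refine le_trans (le_of_eq
    (@coinduced_compose _ _ _ (affineTop k R Z) (fun g => g ≫ ψ) (fun g => g ≫ φ))) ?_
  have this1 : ((fun g : pts k R Y => g ≫ φ) ∘ fun g : pts k R Z => g ≫ ψ)
      = fun g : pts k R Z => g ≫ (ψ ≫ φ) := by
    funext g; exact (Category.assoc g ψ φ)
  refine le_trans (le_of_eq
    (congrArg (fun f => TopologicalSpace.coinduced f (affineTop k R Z)) this1)) ?_
  exact le_iSup_of_le Z (le_iSup_of_le hZ (le_iSup_of_le (ψ ≫ φ) le_rfl))

lemma isOpen_fineTop_iff {X : Over (Spec (CommRingCat.of k))} {W : Set (pts k R X)} :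
    @IsOpen _ (fineTop k R X) W ↔
      ∀ (Y : Over (Spec (CommRingCat.of k))), IsAffine Y.left → ∀ (φ : Y ⟶ X),
        @IsOpen _ (affineTop k R Y) ((fun g : pts k R Y => g ≫ φ) ⁻¹' W) := by
  rw [fineTop]
  simp only [isOpen_iSup_iff, isOpen_coinduced]
  rfl

end

/-- the factorization of a point through an open subscheme containing the image of the
closed point -/
lemma exists_factor (X : Over (Spec (CommRingCat.of k))) [IsLocalRing R]
    (V : X.left.Opens) (g : pts k R X)
    (hg : g.left.base (closedPoint R) ∈ V) :
    ∃ h : pts k R (opensOver X V), h ≫ opensOverHom X V = g := by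
  change specOver k R ⟶ X at g
  have hr : Set.range g.left.base ⊆ Set.range V.ι.base := by
    rw [Scheme.Opens.range_ι]
    rintro _ ⟨x, rfl⟩
    exact ((specializes_closedPoint x).map g.left.base.hom.2).mem_open V.2 hg
  refine ⟨Over.homMk (IsOpenImmersion.lift (X := (V : Scheme))
    V.ι g.left hr) ?_, ?_⟩
  · show IsOpenImmersion.lift V.ι g.left hr ≫ V.ι ≫ X.hom = _
    rw [← Category.assoc, IsOpenImmersion.lift_fac]
    exact Over.w g
  · refine Over.OverMorphism.ext ?_
    exact IsOpenImmersion.lift_fac (X := (V : Scheme)) _ _ hr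

end SchemePoints

namespace SchemePoints

set_option linter.unusedSectionVars false

open IsLocalRing Topology

variable {k R : Type u} [CommRing k] [CommRing R] [Algebra k R] [TopologicalSpace R]

lemma appTop_isoSpec_inv {Y : Scheme.{u}} [IsAffine Y] :
    Y.isoSpec.inv.appTop = (Scheme.ΓSpecIso Γ(Y, ⊤)).inv := by
  rw [← cancel_mono (Scheme.ΓSpecIso Γ(Y, ⊤)).hom, Iso.inv_hom_id, ← Scheme.toSpecΓ_appTop,
    ← Scheme.Hom.comp_appTop]
  show (Y.isoSpec.hom ≫ Y.isoSpec.inv).appTop = _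
  rw [Iso.hom_inv_id, Scheme.Hom.id_appTop]

variable (k R)

/-- the ring homomorphism underlying evaluation at a point, as a morphism in `CommRingCat` -/
def evHom (X : Over (Spec (CommRingCat.of k))) (g : pts k R X) :
    Γ(X.left, ⊤) ⟶ CommRingCat.of R :=
  ((Over.forget _).map g).appTop ≫ (Scheme.ΓSpecIso (CommRingCat.of R)).hom

/-- an algebra homomorphism from global sections, as a morphism in `CommRingCat` -/
def toHom (X : Over (Spec (CommRingCat.of k))) (ψ : Γ(X.left, ⊤) →ₐ[k] R) :
    Γ(X.left, ⊤) ⟶ CommRingCat.of R :=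
  CommRingCat.ofHom ψ.toRingHom

lemma evHom_w (X : Over (Spec (CommRingCat.of k))) (g : pts k R X) :
    X.hom.appTop ≫ evHom k R X g
      = (Scheme.ΓSpecIso (CommRingCat.of k)).hom ≫ CommRingCat.ofHom (algebraMap k R) := by
  have key := congrArg
    (fun h => Scheme.Hom.appTop h ≫ (Scheme.ΓSpecIso (CommRingCat.of R)).hom) (Over.w g)
  rw [Scheme.Hom.comp_appTop] at key
  have h3 : Scheme.Hom.appTop ((specOver k R).hom) ≫ (Scheme.ΓSpecIso (CommRingCat.of R)).hom
      = (Scheme.ΓSpecIso (CommRingCat.of k)).hom ≫ CommRingCat.ofHom (algebraMap k R) :=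
    Scheme.ΓSpecIso_naturality (CommRingCat.ofHom (algebraMap k R))
  exact key.trans h3

/-- evaluation at a point as a `k`-algebra homomorphism -/
def evAlgHom (X : Over (Spec (CommRingCat.of k))) (g : pts k R X) :
    Γ(X.left, ⊤) →ₐ[k] R where
  toRingHom := (evHom k R X g).hom
  commutes' c := by
    have h2 := congrArg (fun (h : Γ(Spec (CommRingCat.of k), ⊤) ⟶ CommRingCat.of R)
      => h ((Scheme.ΓSpecIso (CommRingCat.of k)).inv c)) (evHom_w k R X g)
    have h4 : (Scheme.ΓSpecIso (CommRingCat.of k)).hom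
        ((Scheme.ΓSpecIso (CommRingCat.of k)).inv c) = c :=
      congrArg (fun (h : CommRingCat.of k ⟶ CommRingCat.of k) => h c)
        (Scheme.ΓSpecIso (CommRingCat.of k)).inv_hom_id
    have h3 : evHom k R X g (Scheme.Hom.appTop X.hom
          ((Scheme.ΓSpecIso (CommRingCat.of k)).inv c))
        = algebraMap k R ((Scheme.ΓSpecIso (CommRingCat.of k)).hom
          ((Scheme.ΓSpecIso (CommRingCat.of k)).inv c)) := h2
    rw [h4] at h3
    exact h3

lemma evAlgHom_apply (X : Over (Spec (CommRingCat.of k))) (g : pts k R X) (a : Γ(X.left, ⊤)) :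
    evAlgHom k R X g a = ev k R X g a := rfl

lemma algHom_w (X : Over (Spec (CommRingCat.of k))) (ψ : Γ(X.left, ⊤) →ₐ[k] R) :
    X.hom.appTop ≫ toHom k R X ψ
      = (Scheme.ΓSpecIso (CommRingCat.of k)).hom ≫ CommRingCat.ofHom (algebraMap k R) := by
  rw [← Iso.inv_comp_eq, ← Category.assoc]
  exact CommRingCat.hom_ext (RingHom.ext fun c => ψ.commutes c)

lemma spec_map_evAlgHom (X : Over (Spec (CommRingCat.of k))) [IsAffine X.left] (g : pts k R X) :
    (Over.forget _).map g ≫ X.left.isoSpec.hom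
      = Spec.map (toHom k R X (evAlgHom k R X g)) := by
  have h1 := Scheme.toSpecΓ_naturality ((Over.forget _).map g)
  have h2 : (Spec (CommRingCat.of R)).toSpecΓ
        ≫ Spec.map (Scheme.Hom.appTop ((Over.forget _).map g))
      = Spec.map (toHom k R X (evAlgHom k R X g)) := by
    rw [← SpecMap_ΓSpecIso_hom, ← Spec.map_comp]
    rfl
  exact h1.trans h2

lemma fromAlgHom_w (X : Over (Spec (CommRingCat.of k))) [IsAffine X.left]
    (ψ : Γ(X.left, ⊤) →ₐ[k] R) :
    (Spec.map (toHom k R X ψ) ≫ X.left.isoSpec.inv) ≫ X.hom = (specOver k R).hom := by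
  apply hom_spec_ext
  rw [← cancel_mono (Scheme.ΓSpecIso (CommRingCat.of R)).hom]
  rw [Scheme.Hom.comp_appTop, Scheme.Hom.comp_appTop, appTop_isoSpec_inv]
  rw [Category.assoc, Category.assoc, Scheme.ΓSpecIso_naturality]
  rw [Iso.inv_hom_id_assoc]
  show X.hom.appTop ≫ toHom k R X ψ = _
  rw [algHom_w]
  exact (Scheme.ΓSpecIso_naturality (CommRingCat.ofHom (algebraMap k R))).symm

/-- the point of an affine `k`-scheme corresponding to an algebra homomorphism -/
def fromAlgHom (X : Over (Spec (CommRingCat.of k))) [IsAffine X.left]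
    (ψ : Γ(X.left, ⊤) →ₐ[k] R) : pts k R X :=
  Over.homMk (Spec.map (toHom k R X ψ) ≫ X.left.isoSpec.inv) (fromAlgHom_w k R X ψ)

/-- the equivalence between `R`-points of an affine `k`-scheme `X` and `k`-algebra
homomorphisms from the global sections of `X` to `R` -/
def ptsEquiv (X : Over (Spec (CommRingCat.of k))) [IsAffine X.left] :
    pts k R X ≃ (Γ(X.left, ⊤) →ₐ[k] R) where
  toFun := evAlgHom k R X
  invFun := fromAlgHom k R X
  left_inv g := by
    apply Over.OverMorphism.ext
    show Spec.map (toHom k R X (evAlgHom k R X g)) ≫ X.left.isoSpec.inv = _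
    rw [← spec_map_evAlgHom]
    exact ((Category.assoc _ _ _).trans (congrArg (CategoryStruct.comp ((Over.forget _).map g))
      X.left.isoSpec.hom_inv_id)).trans (Category.comp_id _)
  right_inv ψ := by
    have hleft : (Over.forget _).map (fromAlgHom k R X ψ)
        = Spec.map (toHom k R X ψ) ≫ X.left.isoSpec.inv := rfl
    have H : evHom k R X (fromAlgHom k R X ψ) = toHom k R X ψ := by
      show (Spec.map (toHom k R X ψ) ≫ X.left.isoSpec.inv).appTop
        ≫ (Scheme.ΓSpecIso (CommRingCat.of R)).hom = _
      rw [Scheme.Hom.comp_appTop, appTop_isoSpec_inv, Category.assoc,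
        Scheme.ΓSpecIso_naturality, Iso.inv_hom_id_assoc]
    exact AlgHom.ext fun a =>
      congrArg (fun (h : Γ(X.left, ⊤) ⟶ CommRingCat.of R) => h a) H

end SchemePoints

namespace SchemePoints

set_option linter.unusedSectionVars false

open IsLocalRing Topology

variable {k R : Type u} [CommRing k] [CommRing R] [Algebra k R] [TopologicalSpace R]

lemma affineTop_eq_induced (X : Over (Spec (CommRingCat.of k))) :
    affineTop k R X
      = (affineTopology k Γ(X.left, ⊤) R).induced (evAlgHom k R X) := by
  rw [affineTopology, induced_compose]
  rfl

/-- the homeomorphism between the points of an affine scheme with the affine topology and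
algebra homomorphisms with the affine topology -/
def ptsHomeo (X : Over (Spec (CommRingCat.of k))) [IsAffine X.left] :
    @Homeomorph (pts k R X) (Γ(X.left, ⊤) →ₐ[k] R)
      (affineTop k R X) (affineTopology k Γ(X.left, ⊤) R) :=
  letI := affineTop k R X
  letI := affineTopology k Γ(X.left, ⊤) R
  (ptsEquiv k R X).toHomeomorphOfIsInducing ⟨affineTop_eq_induced X⟩

lemma isOpenEmbedding_basicOpen
    (hF4 : ∀ (A : Type u) [CommRing A] [Algebra k A] (f : A)
      (S : Type u) [CommRing S] [Algebra A S] [Algebra k S] [IsScalarTower k A S],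
      IsLocalization.Away f S →
      @IsOpenEmbedding (S →ₐ[k] R) (A →ₐ[k] R) (affineTopology k S R) (affineTopology k A R)
        (fun g => g.comp (IsScalarTower.toAlgHom k A S)))
    (V : Over (Spec (CommRingCat.of k))) [IsAffine V.left] (f : Γ(V.left, ⊤)) :
    @IsOpenEmbedding _ _ (affineTop k R (opensOver V (V.left.basicOpen f))) (affineTop k R V)
      (fun g => g ≫ opensOverHom V (V.left.basicOpen f)) := by
  set D := V.left.basicOpen f with hD
  haveI hDaff : IsAffine (opensOver V D).left := (isAffineOpen_top V.left).basicOpen f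
  letI : Algebra Γ(V.left, ⊤) Γ((opensOver V D).left, ⊤) := D.ι.appTop.hom.toAlgebra
  haveI : IsScalarTower k Γ(V.left, ⊤) Γ((opensOver V D).left, ⊤) := by
    refine IsScalarTower.of_algebraMap_eq' ?_
    have h1 : Scheme.Hom.appTop (D.ι ≫ V.hom) = V.hom.appTop ≫ D.ι.appTop :=
      Scheme.Hom.comp_appTop _ _
    exact congrArg (fun h => ((Scheme.ΓSpecIso (CommRingCat.of k)).inv ≫ h :
      CommRingCat.of k ⟶ Γ((opensOver V D).left, ⊤)).hom) h1
  haveI hloc : IsLocalization.Away f Γ((opensOver V D).left, ⊤) :=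
    Γ_restrict_isLocalization V.left f
  have hemb := hF4 Γ(V.left, ⊤) f Γ((opensOver V D).left, ⊤) hloc
  have hcomm : ∀ g₀ : pts k R (opensOver V D),
      evAlgHom k R V (g₀ ≫ opensOverHom V D)
        = (evAlgHom k R (opensOver V D) g₀).comp
            (IsScalarTower.toAlgHom k Γ(V.left, ⊤) Γ((opensOver V D).left, ⊤)) := by
    intro g₀
    refine AlgHom.ext fun a => ?_
    show ev k R V (g₀ ≫ opensOverHom V D) a
      = ev k R (opensOver V D) g₀ (algebraMap Γ(V.left, ⊤) Γ((opensOver V D).left, ⊤) a)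
    rw [ev_comp]
    rfl
  have hfun : (fun g₀ : pts k R (opensOver V D) => g₀ ≫ opensOverHom V D)
      = ((ptsEquiv k R V).symm ∘
          ((fun q : Γ((opensOver V D).left, ⊤) →ₐ[k] R =>
            q.comp (IsScalarTower.toAlgHom k Γ(V.left, ⊤) Γ((opensOver V D).left, ⊤))) ∘
            (ptsEquiv k R (opensOver V D)))) := by
    funext g₀
    apply (ptsEquiv k R V).injective
    show evAlgHom k R V (g₀ ≫ opensOverHom V D) = _
    rw [hcomm g₀]
    simp only [Function.comp_apply, Equiv.apply_symm_apply]
    rfl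
  rw [hfun]
  letI := affineTop k R (opensOver V D)
  letI := affineTop k R V
  letI := affineTopology k Γ(V.left, ⊤) R
  letI := affineTopology k Γ((opensOver V D).left, ⊤) R
  exact (ptsHomeo V).symm.isOpenEmbedding.comp
    (hemb.comp (ptsHomeo (opensOver V D)).isOpenEmbedding)

end SchemePoints

open SchemePoints Topology

/-- let `R` be a `k`-algebra with a topology which is a local ring, such that
for every commutative `k`-algebra `A` and every `f ∈ A` the map
`Hom_{k-alg}(A_f, R) → Hom_{k-alg}(A, R)` induced by the localization `A → A_f` is an open
topological embedding for the affine topologies. Then for every `k`-scheme `X` and every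
affine open covering `{U_i}` of `X`: `X(R) = ⋃ᵢ U_i(R)`, and a subset `W ⊆ X(R)` is open in
the fine topology if and only if `W ∩ U_i(R)` is open in `U_i(R)` in the fine topology for
every `i`. -/
theorem statement_15 (k R : Type u) [CommRing k] [CommRing R] [Algebra k R]
    [TopologicalSpace R] [IsLocalRing R]
    (hF4 : ∀ (A : Type u) [CommRing A] [Algebra k A] (f : A)
      (S : Type u) [CommRing S] [Algebra A S] [Algebra k S] [IsScalarTower k A S],
      IsLocalization.Away f S →
      @IsOpenEmbedding (S →ₐ[k] R) (A →ₐ[k] R) (affineTopology k S R) (affineTopology k A R)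
        (fun g => g.comp (IsScalarTower.toAlgHom k A S)))
    (X : Over (Spec (CommRingCat.of k))) (ι : Type u) (U : ι → X.left.Opens)
    (hU : ∀ i, IsAffineOpen (U i)) (hcov : (⨆ i, U i) = ⊤) :
    (∀ g : pts k R X,
      ∃ (i : ι) (h : pts k R (opensOver X (U i))), h ≫ opensOverHom X (U i) = g) ∧
    (∀ W : Set (pts k R X),
      @IsOpen _ (fineTop k R X) W ↔
        ∀ i, @IsOpen _ (fineTop k R (opensOver X (U i)))
          ((fun h : pts k R (opensOver X (U i)) => h ≫ opensOverHom X (U i)) ⁻¹' W)) := by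
  constructor
  · intro g
    have hmem : g.left.base (IsLocalRing.closedPoint R) ∈ (⊤ : X.left.Opens) := trivial
    rw [← hcov] at hmem
    obtain ⟨i, hi⟩ := TopologicalSpace.Opens.mem_iSup.mp hmem
    obtain ⟨h, hh⟩ := SchemePoints.exists_factor X (U i) g hi
    exact ⟨i, h, hh⟩
  · intro W
    constructor
    · intro hW i
      exact @Continuous.isOpen_preimage _ _ (fineTop k R (opensOver X (U i))) (fineTop k R X)
        _ (SchemePoints.continuous_fine_comp (opensOverHom X (U i))) W hW
    · intro hW
      rw [SchemePoints.isOpen_fineTop_iff]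
      intro V hV φ
      haveI := hV
      refine (@isOpen_iff_forall_mem_open _ (affineTop k R V) _).mpr ?_
      intro g hg
      have hx : φ.left.base (g.left.base (IsLocalRing.closedPoint R)) ∈ (⊤ : X.left.Opens) :=
        trivial
      rw [← hcov] at hx
      obtain ⟨i, hi⟩ := TopologicalSpace.Opens.mem_iSup.mp hx
      have hxVi : g.left.base (IsLocalRing.closedPoint R) ∈ φ.left ⁻¹ᵁ U i := hi
      obtain ⟨Df, hDfB, hxf, hfVi⟩ :=
        TopologicalSpace.Opens.isBasis_iff_nbhd.mp (isBasis_basicOpen V.left) hxVi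
      obtain ⟨f, rfl⟩ := hDfB
      haveI hDaff : IsAffine (opensOver V (V.left.basicOpen f)).left :=
        (isAffineOpen_top V.left).basicOpen f
      have hrange : Set.range ((V.left.basicOpen f).ι ≫ φ.left).base
          ⊆ Set.range (U i).ι.base := by
        rw [Scheme.Opens.range_ι]
        rintro _ ⟨y, rfl⟩
        have h1 : (V.left.basicOpen f).ι.base y ∈ ((V.left.basicOpen f) : Set V.left) := by
          rw [← Scheme.Opens.range_ι]; exact ⟨y, rfl⟩
        have h2 := hfVi h1
        simpa using h2
      refine ?_
      set ψ : opensOver V (V.left.basicOpen f) ⟶ opensOver X (U i) := Over.homMk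
        (IsOpenImmersion.lift (X := (U i : Scheme))
          (U i).ι ((V.left.basicOpen f).ι ≫ φ.left) hrange)
        (by
          show _ ≫ (U i).ι ≫ X.hom = (V.left.basicOpen f).ι ≫ V.hom
          exact (Category.assoc _ _ _).symm.trans
            ((congrArg (· ≫ X.hom) (IsOpenImmersion.lift_fac _ _ hrange)).trans
              ((Category.assoc _ _ _).trans
                (congrArg (CategoryStruct.comp (V.left.basicOpen f).ι) (Over.w φ))))) with hψdef
      have hψ : ψ ≫ opensOverHom X (U i) = opensOverHom V (V.left.basicOpen f) ≫ φ := by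
        apply CategoryTheory.Over.OverMorphism.ext
        show IsOpenImmersion.lift (U i).ι ((V.left.basicOpen f).ι ≫ φ.left) hrange ≫ (U i).ι
          = (V.left.basicOpen f).ι ≫ φ.left
        exact IsOpenImmersion.lift_fac _ _ _
      obtain ⟨g₀, hg₀⟩ := SchemePoints.exists_factor V (V.left.basicOpen f) g hxf
      have hopen := SchemePoints.isOpenEmbedding_basicOpen hF4 V f
      have hTopen : @IsOpen _ (fineTop k R (opensOver V (V.left.basicOpen f)))
          ((fun h : pts k R (opensOver V (V.left.basicOpen f)) => h ≫ ψ) ⁻¹'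
            ((fun h : pts k R (opensOver X (U i)) => h ≫ opensOverHom X (U i)) ⁻¹' W)) :=
        @Continuous.isOpen_preimage _ _ (fineTop k R (opensOver V (V.left.basicOpen f)))
          (fineTop k R (opensOver X (U i))) _ (SchemePoints.continuous_fine_comp ψ) _ (hW i)
      rw [SchemePoints.fineTop_eq_affineTop (opensOver V (V.left.basicOpen f))] at hTopen
      have hOpenMap : ∀ T, @IsOpen _ (affineTop k R (opensOver V (V.left.basicOpen f))) T →
          @IsOpen _ (affineTop k R V)
            ((fun h : pts k R (opensOver V (V.left.basicOpen f))
              => h ≫ opensOverHom V (V.left.basicOpen f)) '' T) := by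
        letI := affineTop k R (opensOver V (V.left.basicOpen f))
        letI := affineTop k R V
        exact hopen.isOpenMap
      refine ⟨(fun h : pts k R (opensOver V (V.left.basicOpen f))
          => h ≫ opensOverHom V (V.left.basicOpen f)) ''
          ((fun h : pts k R (opensOver V (V.left.basicOpen f)) => h ≫ ψ) ⁻¹'
            ((fun h : pts k R (opensOver X (U i)) => h ≫ opensOverHom X (U i)) ⁻¹' W)),
        ?_, hOpenMap _ hTopen, ⟨g₀, ?_, hg₀⟩⟩
      · rintro _ ⟨h₀, hh₀, rfl⟩
        show (h₀ ≫ opensOverHom V (V.left.basicOpen f)) ≫ φ ∈ W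
        have heq : (h₀ ≫ opensOverHom V (V.left.basicOpen f)) ≫ φ
            = (h₀ ≫ ψ) ≫ opensOverHom X (U i) := by
          exact (Category.assoc _ _ _).trans ((congrArg (CategoryStruct.comp h₀) hψ.symm).trans
            (Category.assoc _ _ _).symm)
        rw [heq]
        exact hh₀
      · show (g₀ ≫ ψ) ≫ opensOverHom X (U i) ∈ W
        have heq : (g₀ ≫ ψ) ≫ opensOverHom X (U i)
            = (g₀ ≫ opensOverHom V (V.left.basicOpen f)) ≫ φ := by
          exact (Category.assoc _ _ _).trans ((congrArg (CategoryStruct.comp g₀) hψ).trans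
            (Category.assoc _ _ _).symm)
        rw [heq, hg₀]
        exact hg
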